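/- Let α = γ_{b,r} ∧ γ_{L,R'} with 0 ≤ L ≤ b and 0 < r < R' < ∞, and let β = δ_D ⊗ min_{i=1..n}((δ_{τ_i} ⊗ I_{σ_i} ⊗ γ_{0,ρ_i}) ∧ δ_0) be an MSLC curve with D ≥ 0, τ_i, σ_i ≥ 0, ρ_i ∈ (0,+∞], where R' ≥ max{ρ_i : ρ_i < +∞} and r ≤ min_i ρ_i. Write Y = ((b−L)/(R'−r))·r + b. Then hdev(α, β) = D + max( 0, max over i with ρ_i < +∞ of max(0, τ_i·1{σ_i ≥ Y} − [σ_i − b]⁺/r, τ_i·1{Y ≥ σ_i} + [Y − σ_i]⁺/ρ_i − (b−L)/(R'−r)), max over i with ρ_i = +∞ of max(0, τ_i·1{σ_i ≥ Y} − [σ_i − b]⁺/r, τ_i·1{Y ≥ σ_i} − [σ_i − L]⁺/R') ), where [x]⁺ = max(x,0) and 1{C} is 1 if condition C holds and 0 otherwise. -/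

import Mathlib

open scoped ENNReal
open Classical

noncomputable section

/-- Burst-delay function `δ_T`: `0` for `t ≤ T`, `+∞` for `t > T`. -/
def bdelay (T : ℝ) : ℝ → ℝ≥0∞ := fun t => if t ≤ T then 0 else ⊤

/-- Window function `I_w`: `w` at `t = 0`, `+∞` for `t > 0` (and `0` for `t < 0`). -/
def wndw (w : ℝ≥0∞) : ℝ → ℝ≥0∞ := fun t => if t < 0 then 0 else if t = 0 then w else ⊤

/-- Token-bucket curve `γ_{b,r}`: `b + r·t` for `t > 0`, `0` for `t ≤ 0`. -/
def tbkt (b r : ℝ≥0∞) : ℝ → ℝ≥0∞ := fun t => if t ≤ 0 then 0 else b + r * ENNReal.ofReal t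

/-- Min-plus convolution `(f ⊗ g)(t) = inf_{0 ≤ u ≤ t} (f(t − u) + g(u))` for `t ≥ 0`,
extended by `0` on negative times. -/
def mconv (f g : ℝ → ℝ≥0∞) : ℝ → ℝ≥0∞ :=
  fun t => if t < 0 then 0 else ⨅ u ∈ Set.Icc (0 : ℝ) t, (f (t - u) + g u)

/-- The basic MSLC building block `(δ_τ ⊗ I_σ ⊗ γ_{0,ρ}) ∧ δ_0`. -/
def mslcStep (τ : ℝ) (σ ρ : ℝ≥0∞) : ℝ → ℝ≥0∞ :=
  mconv (mconv (bdelay τ) (wndw σ)) (tbkt 0 ρ) ⊓ bdelay 0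

/-- Horizontal deviation (delay bound):
`hdev(α, β) = sup_{t ≥ 0} inf { d ≥ 0 : α(t − d) ≤ β(t) }`. -/
def hdev (α β : ℝ → ℝ≥0∞) : ℝ≥0∞ :=
  ⨆ t ∈ Set.Ici (0 : ℝ), ⨅ d ∈ {d : ℝ | 0 ≤ d ∧ α (t - d) ≤ β t}, ENNReal.ofReal d

/-- Vertical deviation (backlog bound): `vdev(α, β) = sup_{u ≥ 0} (α(u) − β(u))`
with truncated subtraction (so `x − (+∞) = 0`). -/
def vdev (α β : ℝ → ℝ≥0∞) : ℝ≥0∞ :=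
  ⨆ u ∈ Set.Ici (0 : ℝ), (α u - β u)

/-- Min-plus deconvolution `(f ⊘ g)(t) = sup_{u ≥ 0} (f(t + u) − g(u))`. -/
def mdeconv (f g : ℝ → ℝ≥0∞) : ℝ → ℝ≥0∞ :=
  fun t => ⨆ u ∈ Set.Ici (0 : ℝ), (f (t + u) - g u)

/-- FIFO leftover `(β ⊖_θ α)(t) = [β(t) − α(t − θ)]⁺` for `t > θ`, `0` for `t ≤ θ`. -/
def leftover (β α : ℝ → ℝ≥0∞) (θ : ℝ) : ℝ → ℝ≥0∞ :=
  fun t => if t ≤ θ then 0 else β t - α (t - θ)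

/-- Nondecreasing lower bound `f↑(t) = inf_{u ≥ t} f(u)`. -/
def ndlb (f : ℝ → ℝ≥0∞) : ℝ → ℝ≥0∞ := fun t => ⨅ u ∈ Set.Ici t, f u

lemma mconv_apply (f g : ℝ → ℝ≥0∞) {t : ℝ} (ht : 0 ≤ t) :
    mconv f g t = ⨅ u ∈ Set.Icc (0 : ℝ) t, (f (t - u) + g u) := if_neg (not_lt.2 ht)

lemma bdelay_of_le {T t : ℝ} (h : t ≤ T) : bdelay T t = 0 := if_pos h
lemma bdelay_of_gt {T t : ℝ} (h : T < t) : bdelay T t = ⊤ := if_neg (not_le.2 h)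
lemma tbkt_of_nonpos {b r : ℝ≥0∞} {t : ℝ} (h : t ≤ 0) : tbkt b r t = 0 := if_pos h
lemma tbkt_of_pos {b r : ℝ≥0∞} {t : ℝ} (h : 0 < t) : tbkt b r t = b + r * ENNReal.ofReal t :=
  if_neg (not_le.2 h)

lemma mconv_wndw (τ : ℝ) (σ : ℝ≥0∞) {s : ℝ} (hs : 0 ≤ s) :
    mconv (bdelay τ) (wndw σ) s = bdelay τ s + σ := by
  rw [mconv_apply _ _ hs]
  apply le_antisymm
  · exact iInf₂_le_of_le 0 ⟨le_refl 0, hs⟩ (by simp [wndw])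
  · refine le_iInf₂ fun u hu => ?_
    rcases eq_or_lt_of_le hu.1 with h | h
    · simp [wndw, ← h]
    · simp [wndw, h.ne', not_lt.2 h.le]

lemma mslcStep_eval (τ : ℝ) (σ ρ : ℝ≥0∞) (hτ : 0 ≤ τ) (t : ℝ) :
    mslcStep τ σ ρ t = if t ≤ 0 then 0 else σ + ρ * ENNReal.ofReal (t - τ) := by
  unfold mslcStep
  rcases le_or_gt t 0 with ht | ht
  · rw [if_pos ht]
    simp [Pi.inf_apply, bdelay_of_le ht]
  · rw [if_neg (not_le.2 ht)]
    have hconv : mconv (mconv (bdelay τ) (wndw σ)) (tbkt 0 ρ) t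
        = σ + ρ * ENNReal.ofReal (t - τ) := by
      rw [mconv_apply _ _ ht.le]
      apply le_antisymm
      · set u₀ : ℝ := max 0 (t - τ) with hu₀
        have hu₀mem : u₀ ∈ Set.Icc (0:ℝ) t :=
          ⟨le_max_left _ _, max_le ht.le (by linarith)⟩
        refine iInf₂_le_of_le u₀ hu₀mem (le_of_eq ?_)
        have htu : 0 ≤ t - u₀ := by
          have := le_max_right 0 (t - τ); simp only [hu₀]
          rcases le_total 0 (t - τ) with h | h
          · rw [max_eq_right h]; linarith
          · rw [max_eq_left h]; linarith
        have h1 : mconv (bdelay τ) (wndw σ) (t - u₀) = σ := by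
          rw [mconv_wndw τ σ htu]
          have : t - u₀ ≤ τ := by
            have := le_max_right 0 (t - τ); simp only [hu₀] at *; linarith
          rw [bdelay_of_le this, zero_add]
        rw [h1]
        rcases le_or_gt t τ with h | h
        · have h0 : u₀ = 0 := max_eq_left (by linarith)
          rw [h0, tbkt_of_nonpos (le_refl (0:ℝ)),
            ENNReal.ofReal_eq_zero.2 (by linarith : t - τ ≤ 0)]
          simp
        · have hu : u₀ = t - τ := max_eq_right (by linarith)
          rw [hu, tbkt_of_pos (by linarith : (0:ℝ) < t - τ), zero_add]
      · refine le_iInf₂ fun u hu => ?_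
        rcases le_or_gt (t - u) τ with h | h
        · have h1 : mconv (bdelay τ) (wndw σ) (t - u) = σ := by
            rw [mconv_wndw τ σ (by linarith [hu.2]), bdelay_of_le h, zero_add]
          rw [h1]
          refine add_le_add_right ?_ σ
          rcases eq_or_lt_of_le hu.1 with h2 | h2
          · rw [← h2, tbkt_of_nonpos (le_refl (0:ℝ)),
              ENNReal.ofReal_eq_zero.2 (by linarith : t - τ ≤ 0), mul_zero]
          · rw [tbkt_of_pos h2, zero_add]
            calc ρ * ENNReal.ofReal (t - τ) ≤ ρ * ENNReal.ofReal u :=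
                  mul_le_mul_right (ENNReal.ofReal_le_ofReal (by linarith)) ρ
              _ ≤ _ := le_refl _
        · have h1 : mconv (bdelay τ) (wndw σ) (t - u) = ⊤ := by
            rw [mconv_wndw τ σ (by linarith [hu.2]), bdelay_of_gt h]
            simp
          simp [h1]
    simp [Pi.inf_apply, bdelay_of_gt ht, hconv]

lemma mconv_bdelay (D : ℝ) (hD : 0 ≤ D) (G : ℝ → ℝ≥0∞)
    (hG0 : ∀ t ≤ (0:ℝ), G t = 0) (hGm : Monotone G) (t : ℝ) :
    mconv (bdelay D) G t = G (t - D) := by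
  rcases lt_or_ge t 0 with ht | ht
  · rw [mconv, if_pos ht, hG0 _ (by linarith)]
  · rw [mconv_apply _ _ ht]
    apply le_antisymm
    · set u₀ : ℝ := max 0 (t - D) with hu₀
      have hu₀mem : u₀ ∈ Set.Icc (0:ℝ) t := ⟨le_max_left _ _, max_le ht (by linarith)⟩
      refine iInf₂_le_of_le u₀ hu₀mem ?_
      have h1 : bdelay D (t - u₀) = 0 := by
        apply bdelay_of_le
        have := le_max_right 0 (t - D); simp only [hu₀] at *; linarith
      rw [h1, zero_add]
      rcases le_total (t - D) 0 with h | h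
      · rw [hG0 _ h, show u₀ = 0 from max_eq_left h, hG0 _ (le_refl 0)]
      · rw [show u₀ = t - D from max_eq_right h]
    · refine le_iInf₂ fun u hu => ?_
      rcases le_or_gt (t - u) D with h | h
      · rw [bdelay_of_le h, zero_add]
        exact hGm (by linarith)
      · rw [bdelay_of_gt h]; simp

section Alpha
variable {L b r R' : ℝ}

lemma alpha_eval (hL : 0 ≤ L) (hLb : L ≤ b) (hr : 0 < r) (hR : 0 < R') (s : ℝ) :
    (tbkt (ENNReal.ofReal b) (ENNReal.ofReal r)
      ⊓ tbkt (ENNReal.ofReal L) (ENNReal.ofReal R')) s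
    = if s ≤ 0 then 0 else ENNReal.ofReal (min (b + r * s) (L + R' * s)) := by
  rcases le_or_gt s 0 with hs | hs
  · simp [Pi.inf_apply, tbkt_of_nonpos hs, if_pos hs]
  · rw [if_neg (not_le.2 hs), Pi.inf_apply, tbkt_of_pos hs, tbkt_of_pos hs,
      ← ENNReal.ofReal_mul hr.le, ← ENNReal.ofReal_mul hR.le,
      ← ENNReal.ofReal_add (by linarith) (by positivity),
      ← ENNReal.ofReal_add hL (by positivity)]
    exact (Monotone.map_min (fun _ _ h => ENNReal.ofReal_le_ofReal h)).symm

lemma alpha_mono (hL : 0 ≤ L) (hLb : L ≤ b) (hr : 0 < r) (hR : 0 < R') :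
    Monotone (tbkt (ENNReal.ofReal b) (ENNReal.ofReal r)
      ⊓ tbkt (ENNReal.ofReal L) (ENNReal.ofReal R')) := by
  intro x y hxy
  rw [alpha_eval hL hLb hr hR, alpha_eval hL hLb hr hR]
  rcases le_or_gt x 0 with hx | hx
  · simp [if_pos hx]
  · rw [if_neg (not_le.2 hx), if_neg (not_le.2 (lt_of_lt_of_le hx hxy))]
    apply ENNReal.ofReal_le_ofReal
    exact min_le_min (by nlinarith) (by nlinarith)

lemma alpha_eq_zero_iff (hL : 0 ≤ L) (hLb : L ≤ b) (hr : 0 < r) (hR : 0 < R') {s : ℝ}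
    (h : (tbkt (ENNReal.ofReal b) (ENNReal.ofReal r)
      ⊓ tbkt (ENNReal.ofReal L) (ENNReal.ofReal R')) s ≤ 0) : s ≤ 0 := by
  by_contra hs
  push_neg at hs
  rw [alpha_eval hL hLb hr hR, if_neg (not_le.2 hs)] at h
  have : min (b + r * s) (L + R' * s) ≤ 0 :=
    ENNReal.ofReal_eq_zero.1 (le_antisymm h (zero_le))
  have h1 : (0:ℝ) < b + r * s := by nlinarith
  have h2 : (0:ℝ) < L + R' * s := by nlinarith
  rcases le_total (b + r * s) (L + R' * s) with hm | hm <;> simp [min_eq_left, min_eq_right, hm] at this <;> linarith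

/-- pseudo-inverse bound : α x ≤ ofReal c implies x ≤ max 0 (max ((c-b)/r) ((c-L)/R')). -/
lemma alpha_inv (hL : 0 ≤ L) (hLb : L ≤ b) (hr : 0 < r) (hR : 0 < R') {s : ℝ} {c : ℝ}
    (hc : 0 ≤ c)
    (h : (tbkt (ENNReal.ofReal b) (ENNReal.ofReal r)
      ⊓ tbkt (ENNReal.ofReal L) (ENNReal.ofReal R')) s ≤ ENNReal.ofReal c) :
    s ≤ max 0 (max ((c - b)/r) ((c - L)/R')) := by
  rcases le_or_gt s 0 with hs | hs
  · exact le_trans hs (le_max_left _ _)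
  · rw [alpha_eval hL hLb hr hR, if_neg (not_le.2 hs)] at h
    have hA : min (b + r * s) (L + R' * s) ≤ c :=
      (ENNReal.ofReal_le_ofReal_iff hc).1 h
    rcases min_le_iff.1 hA with h1 | h1
    · have : s ≤ (c - b)/r := by rw [le_div_iff₀ hr]; linarith
      exact le_trans this (le_trans (le_max_left _ _) (le_max_right _ _))
    · have : s ≤ (c - L)/R' := by rw [le_div_iff₀ hR]; linarith
      exact le_trans this (le_trans (le_max_right _ _) (le_max_right _ _))

end Alpha

section Key
variable {L b r R' τ sg ρr m : ℝ}

lemma sstar_nonneg (hLb : L ≤ b) (hrR : r < R') : 0 ≤ (b - L)/(R' - r) :=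
  div_nonneg (by linarith) (by linarith)

lemma sstar_mul (hrR : r < R') : (R' - r) * ((b - L)/(R' - r)) = b - L := by
  rw [mul_comm]
  exact div_mul_cancel₀ _ (by linarith : R' - r ≠ 0)

lemma key_top (hr : 0 < r) (hrR : r < R') (hLb : L ≤ b) (hL : 0 ≤ L)
    (hm1 : (b - L)/(R' - r) * r + b ≤ sg → τ - (sg - b)/r ≤ m)
    (hm2 : sg < (b - L)/(R' - r) * r + b → τ - max (sg - L) 0 / R' ≤ m)
    (s : ℝ) (hsτ : s ≤ τ) (hx : 0 < s - m) :
    min (b + r * (s - m)) (L + R' * (s - m)) ≤ sg := by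
  set ss := (b - L)/(R' - r) with hss
  have hs0 : 0 ≤ ss := sstar_nonneg hLb hrR
  have hsm : (R' - r) * ss = b - L := sstar_mul hrR
  rcases le_or_gt (ss * r + b) sg with hY | hY
  · have h1 := hm1 hY
    have hxb : s - m ≤ (sg - b)/r := by linarith
    have : r * (s - m) ≤ sg - b := by
      have := mul_le_mul_of_nonneg_left hxb hr.le
      rwa [mul_div_cancel₀ _ hr.ne'] at this
    exact le_trans (min_le_left _ _) (by linarith)
  · have h1 := hm2 hY
    have hR : 0 < R' := by linarith
    rcases le_or_gt sg L with hsL | hsL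
    · exfalso
      rw [max_eq_right (by linarith)] at h1
      simp at h1
      linarith
    · rw [max_eq_left (by linarith)] at h1
      have hxb : s - m ≤ (sg - L)/R' := by linarith
      have : R' * (s - m) ≤ sg - L := by
        have := mul_le_mul_of_nonneg_left hxb hR.le
        rwa [mul_div_cancel₀ _ hR.ne'] at this
      exact le_trans (min_le_right _ _) (by linarith)

lemma key_fin (hr : 0 < r) (hrR : r < R') (hLb : L ≤ b) (hL : 0 ≤ L) (hsg : 0 ≤ sg)
    (hrρ : r ≤ ρr) (hρR : ρr ≤ R')
    (hm1 : (b - L)/(R' - r) * r + b ≤ sg → τ - (sg - b)/r ≤ m)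
    (hm2 : sg < (b - L)/(R' - r) * r + b →
      τ + ((b - L)/(R' - r) * r + b - sg)/ρr - (b - L)/(R' - r) ≤ m)
    (s : ℝ) (hx : 0 < s - m) :
    min (b + r * (s - m)) (L + R' * (s - m)) ≤ sg + ρr * max (s - τ) 0 := by
  set ss := (b - L)/(R' - r) with hss
  have hs0 : 0 ≤ ss := sstar_nonneg hLb hrR
  have hsm : (R' - r) * ss = b - L := sstar_mul hrR
  have hρ : 0 < ρr := lt_of_lt_of_le hr hrρ
  have hR : 0 < R' := by linarith
  rcases le_or_gt (ss * r + b) sg with hY | hY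
  · -- sg ≥ Y
    have h1 := hm1 hY
    have hxb : s - m ≤ s - τ + (sg - b)/r := by linarith
    have hrc : r * ((sg - b)/r) = sg - b := mul_div_cancel₀ _ hr.ne'
    have h2 : r * (s - m) ≤ r * (s - τ + (sg - b)/r) :=
      mul_le_mul_of_nonneg_left hxb hr.le
    rw [mul_add, hrc] at h2
    refine le_trans (min_le_left _ _) ?_
    rcases le_or_gt s τ with h3 | h3
    · rw [max_eq_right (by linarith)]
      have hxb' : s - m ≤ (sg - b)/r := by linarith
      have h2' : r * (s - m) ≤ sg - b := by
        have := mul_le_mul_of_nonneg_left hxb' hr.le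
        rwa [hrc] at this
      linarith
    · rw [max_eq_left (by linarith)]
      have h4 : r * (s - τ) ≤ ρr * (s - τ) :=
        mul_le_mul_of_nonneg_right hrρ (by linarith)
      nlinarith [h2, h4]
  · -- sg < Y
    set q := (ss * r + b - sg)/ρr with hq
    have hq0 : 0 ≤ q := div_nonneg (by linarith) hρ.le
    have hqc : ρr * q = ss * r + b - sg := mul_div_cancel₀ _ hρ.ne'
    have h1 := hm2 hY
    have hRq : ρr * q ≤ R' * q := mul_le_mul_of_nonneg_right hρR hq0
    have hRs : R' * ss = ss * r + b - L := by nlinarith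
    rcases le_or_gt s (τ + q) with hs | hs
    · -- use the L + R' line
      refine le_trans (min_le_right _ _) ?_
      have hxb : s - m ≤ s - τ - q + ss := by linarith
      rcases le_or_gt s τ with h3 | h3
      · rw [max_eq_right (by linarith)]
        have h5 : R' * (s - m) ≤ R' * (ss - q) :=
          mul_le_mul_of_nonneg_left (by linarith) hR.le
        rw [mul_sub] at h5
        linarith
      · rw [max_eq_left (by linarith)]
        have hflip : R' * (s - τ - q) ≤ ρr * (s - τ - q) :=
          mul_le_mul_of_nonpos_right hρR (by linarith)
        have h5 : R' * (s - m) ≤ R' * (s - τ - q + ss) :=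
          mul_le_mul_of_nonneg_left hxb hR.le
        rw [mul_add] at h5
        have hexp : ρr * (s - τ - q) = ρr * (s - τ) - ρr * q := by ring
        linarith
    · -- use the b + r line
      refine le_trans (min_le_left _ _) ?_
      rw [max_eq_left (by linarith)]
      have hxb : s - m ≤ s - τ - q + ss := by linarith
      have hup : r * (s - τ - q) ≤ ρr * (s - τ - q) :=
        mul_le_mul_of_nonneg_right hrρ (by linarith)
      have h5 : r * (s - m) ≤ r * (s - τ - q + ss) :=
        mul_le_mul_of_nonneg_left hxb hr.le
      rw [mul_add] at h5
      have hexp : ρr * (s - τ - q) = ρr * (s - τ) - ρr * q := by ring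
      have hrs : r * ss = ss * r := mul_comm _ _
      linarith
end Key

lemma ofReal_D_max {D a c : ℝ} {X : ℝ≥0∞} (h0 : ENNReal.ofReal D ≤ X)
    (h1 : ENNReal.ofReal (D + a) ≤ X) (h2 : ENNReal.ofReal (D + c) ≤ X) :
    ENNReal.ofReal (D + max 0 (max a c)) ≤ X := by
  rcases le_total a c with h | h
  · rw [max_eq_right h]
    rcases le_total (0:ℝ) c with h' | h'
    · rw [max_eq_right h']; exact h2
    · rw [max_eq_left h', add_zero]; exact h0
  · rw [max_eq_left h]
    rcases le_total (0:ℝ) a with h' | h'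
    · rw [max_eq_right h']; exact h1
    · rw [max_eq_left h', add_zero]; exact h0

lemma hdev_ge (α β : ℝ → ℝ≥0∞) (t₀ c : ℝ) (ht₀ : 0 ≤ t₀)
    (h : ∀ d, 0 ≤ d → α (t₀ - d) ≤ β t₀ → c ≤ d) :
    ENNReal.ofReal c ≤ hdev α β := by
  unfold hdev
  refine le_trans ?_ (le_iSup₂ t₀ ht₀)
  exact le_iInf₂ fun d hd => ENNReal.ofReal_le_ofReal (h d hd.1 hd.2)


/-- delay bound for a shaped arrival curve and a general MSLC service curve. -/
theorem stmt8 (L b r R' D : ℝ) (n : ℕ) (hn : 0 < n)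
    (tau sig : Fin n → ℝ) (rho : Fin n → ℝ≥0∞)
    (hL : 0 ≤ L) (hLb : L ≤ b) (hr : 0 < r) (hrR : r < R') (hD : 0 ≤ D)
    (htau : ∀ i, 0 ≤ tau i) (hsig : ∀ i, 0 ≤ sig i) (hrhopos : ∀ i, 0 < rho i)
    (hrhoR : ∀ i, rho i ≠ ⊤ → (rho i).toReal ≤ R')
    (hrrho : ∀ i, ENNReal.ofReal r ≤ rho i) :
    hdev (tbkt (ENNReal.ofReal b) (ENNReal.ofReal r)
            ⊓ tbkt (ENNReal.ofReal L) (ENNReal.ofReal R'))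
         (mconv (bdelay D) (⨅ i, mslcStep (tau i) (ENNReal.ofReal (sig i)) (rho i)))
      = ENNReal.ofReal D + ⨆ i, ENNReal.ofReal
          (if rho i = ⊤ then
            max 0 (max
              (tau i * (if (b - L) / (R' - r) * r + b ≤ sig i then 1 else 0)
                - max (sig i - b) 0 / r)
              (tau i * (if sig i ≤ (b - L) / (R' - r) * r + b then 1 else 0)
                - max (sig i - L) 0 / R'))
          else
            max 0 (max
              (tau i * (if (b - L) / (R' - r) * r + b ≤ sig i then 1 else 0)
                - max (sig i - b) 0 / r)
              (tau i * (if sig i ≤ (b - L) / (R' - r) * r + b then 1 else 0)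
                + max ((b - L) / (R' - r) * r + b - sig i) 0 / (rho i).toReal
                - (b - L) / (R' - r)))) := by

  have main : ∀ (mf : Fin n → ℝ), (∀ i, mf i =
      (if rho i = ⊤ then
        max 0 (max
          (tau i * (if (b - L) / (R' - r) * r + b ≤ sig i then 1 else 0)
            - max (sig i - b) 0 / r)
          (tau i * (if sig i ≤ (b - L) / (R' - r) * r + b then 1 else 0)
            - max (sig i - L) 0 / R'))
      else
        max 0 (max
          (tau i * (if (b - L) / (R' - r) * r + b ≤ sig i then 1 else 0)
            - max (sig i - b) 0 / r)
          (tau i * (if sig i ≤ (b - L) / (R' - r) * r + b then 1 else 0)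
            + max ((b - L) / (R' - r) * r + b - sig i) 0 / (rho i).toReal
            - (b - L) / (R' - r))))) →
      hdev (tbkt (ENNReal.ofReal b) (ENNReal.ofReal r)
            ⊓ tbkt (ENNReal.ofReal L) (ENNReal.ofReal R'))
         (mconv (bdelay D) (⨅ i, mslcStep (tau i) (ENNReal.ofReal (sig i)) (rho i)))
      = ENNReal.ofReal D + ⨆ i, ENNReal.ofReal (mf i) := by
    intro mf hmf
    haveI : Nonempty (Fin n) := ⟨⟨0, hn⟩⟩
    have hR' : 0 < R' := lt_trans hr hrR
    set α := tbkt (ENNReal.ofReal b) (ENNReal.ofReal r)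
        ⊓ tbkt (ENNReal.ofReal L) (ENNReal.ofReal R') with hα
    set ss : ℝ := (b - L) / (R' - r) with hss
    have hss0 : 0 ≤ ss := sstar_nonneg hLb hrR
    have hsm : (R' - r) * ss = b - L := sstar_mul hrR
    have hYb : b ≤ ss * r + b := by nlinarith
    have hY0 : 0 ≤ ss * r + b := by linarith
    have hm0 : ∀ i, 0 ≤ mf i := by
      intro i
      rw [hmf i]
      by_cases htop : rho i = ⊤
      · rw [if_pos htop]; exact le_max_left _ _
      · rw [if_neg htop]; exact le_max_left _ _
    -- key hypotheses feeding the real lemmas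
    have hkey1 : ∀ i, ss * r + b ≤ sig i → tau i - (sig i - b) / r ≤ mf i := by
      intro i hY
      have h1 : max (sig i - b) 0 = sig i - b := max_eq_left (by linarith)
      rw [hmf i]
      by_cases htop : rho i = ⊤
      · rw [if_pos htop, if_pos hY, mul_one, h1]
        exact le_trans (le_max_left _ _) (le_max_right _ _)
      · rw [if_neg htop, if_pos hY, mul_one, h1]
        exact le_trans (le_max_left _ _) (le_max_right _ _)
    have hkey2top : ∀ i, rho i = ⊤ → sig i < ss * r + b →
        tau i - max (sig i - L) 0 / R' ≤ mf i := by
      intro i htop hY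
      rw [hmf i, if_pos htop, if_pos hY.le, mul_one]
      exact le_trans (le_max_right _ _) (le_max_right _ _)
    have hkey2fin : ∀ i, rho i ≠ ⊤ → sig i < ss * r + b →
        tau i + (ss * r + b - sig i) / (rho i).toReal - ss ≤ mf i := by
      intro i htop hY
      rw [hmf i, if_neg htop, if_pos hY.le, mul_one]
      have h1 : max (ss * r + b - sig i) 0 = ss * r + b - sig i :=
        max_eq_left (by linarith)
      rw [h1]
      exact le_trans (le_max_right _ _) (le_max_right _ _)
    -- per-component toReal facts
    have hrρ : ∀ i, rho i ≠ ⊤ → r ≤ (rho i).toReal := by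
      intro i htop
      exact (ENNReal.ofReal_le_iff_le_toReal htop).1 (hrrho i)
    -- ENNReal-level upper bound
    have hUB : ∀ i (s : ℝ), α (s - mf i)
        ≤ ENNReal.ofReal (sig i) + rho i * ENNReal.ofReal (s - tau i) := by
      intro i s
      rcases le_or_gt (s - mf i) 0 with hx | hx
      · rw [hα, alpha_eval hL hLb hr hR', if_pos hx]; exact zero_le
      by_cases htop : rho i = ⊤
      · rcases le_or_gt s (tau i) with hsτ | hsτ
        · have hkt := key_top hr hrR hLb hL (hkey1 i) (hkey2top i htop) s hsτ hx
          rw [hα, alpha_eval hL hLb hr hR', if_neg (not_le.2 hx)]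
          exact le_trans (ENNReal.ofReal_le_ofReal hkt) (self_le_add_right _ _)
        · rw [htop, ENNReal.top_mul (by
            simp only [ne_eq, ENNReal.ofReal_eq_zero, not_le]; linarith)]
          simp
      · have hkf := key_fin hr hrR hLb hL (hsig i) (hrρ i htop) (hrhoR i htop)
          (hkey1 i) (hkey2fin i htop) s hx
        have hmax : ENNReal.ofReal (max (s - tau i) 0) = ENNReal.ofReal (s - tau i) := by
          rcases le_total (s - tau i) 0 with h | h
          · rw [max_eq_right h, ENNReal.ofReal_zero, ENNReal.ofReal_eq_zero.2 h]
          · rw [max_eq_left h]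
        have hrhs : ENNReal.ofReal (sig i) + rho i * ENNReal.ofReal (s - tau i)
            = ENNReal.ofReal (sig i + (rho i).toReal * max (s - tau i) 0) := by
          rw [ENNReal.ofReal_add (hsig i)
              (mul_nonneg ENNReal.toReal_nonneg (le_max_right _ _)),
            ENNReal.ofReal_mul ENNReal.toReal_nonneg, hmax, ENNReal.ofReal_toReal htop]
        rw [hα, alpha_eval hL hLb hr hR', if_neg (not_le.2 hx), hrhs]
        exact ENNReal.ofReal_le_ofReal hkf
    -- the service curve in closed form
    set G : ℝ → ℝ≥0∞ := fun t => if t ≤ 0 then 0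
        else ⨅ i, (ENNReal.ofReal (sig i) + rho i * ENNReal.ofReal (t - tau i)) with hG
    have hGeq : (⨅ i, mslcStep (tau i) (ENNReal.ofReal (sig i)) (rho i)) = G := by
      funext t
      rw [iInf_apply]
      rcases le_or_gt t 0 with h | h
      · simp only [hG, if_pos h]
        have : ∀ i, mslcStep (tau i) (ENNReal.ofReal (sig i)) (rho i) t = 0 := fun i => by
          rw [mslcStep_eval _ _ _ (htau i) t, if_pos h]
        simp [this]
      · simp only [hG, if_neg (not_le.2 h)]
        refine iInf_congr fun i => ?_
        rw [mslcStep_eval _ _ _ (htau i) t, if_neg (not_le.2 h)]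
    have hG0 : ∀ t ≤ (0:ℝ), G t = 0 := fun t ht => if_pos ht
    have hGm : Monotone G := by
      intro x y hxy
      rcases le_or_gt x 0 with hx | hx
      · rw [hG0 x hx]; exact zero_le
      · simp only [hG, if_neg (not_le.2 hx), if_neg (not_le.2 (lt_of_lt_of_le hx hxy))]
        exact iInf_mono fun i => add_le_add_right
          (mul_le_mul_right (ENNReal.ofReal_le_ofReal (by linarith)) _) _
    have hβ : ∀ t, mconv (bdelay D) (⨅ i, mslcStep (tau i) (ENNReal.ofReal (sig i)) (rho i)) t
        = G (t - D) := by
      intro t; rw [hGeq]; exact mconv_bdelay D hD G hG0 hGm t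
    have hGle : ∀ (t : ℝ), 0 < t → ∀ i,
        G t ≤ ENNReal.ofReal (sig i) + rho i * ENNReal.ofReal (t - tau i) := by
      intro t ht i
      simp only [hG, if_neg (not_le.2 ht)]
      exact iInf_le _ i
    set β := mconv (bdelay D) (⨅ i, mslcStep (tau i) (ENNReal.ofReal (sig i)) (rho i)) with hβdef
    -- α at 0 and positivity
    have hα0 : ∀ x ≤ (0:ℝ), α x = 0 := by
      intro x hx; rw [hα, alpha_eval hL hLb hr hR', if_pos hx]
    apply le_antisymm
    · -- upper bound
      obtain ⟨j, hj⟩ := Finite.exists_max mf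
      have hsupr : (⨆ i, ENNReal.ofReal (mf i)) = ENNReal.ofReal (mf j) :=
        le_antisymm (iSup_le fun i => ENNReal.ofReal_le_ofReal (hj i)) (le_iSup (fun i => ENNReal.ofReal (mf i)) j)
      rw [hsupr, ← ENNReal.ofReal_add hD (hm0 j)]
      unfold hdev
      refine iSup₂_le fun t ht => ?_
      rcases le_or_gt t (D + mf j) with hcase | hcase
      · refine iInf₂_le_of_le t ⟨ht, ?_⟩ (ENNReal.ofReal_le_ofReal hcase)
        rw [sub_self, hα0 0 (le_refl 0)]
        exact zero_le
      · refine iInf₂_le_of_le (D + mf j) ⟨by linarith [hm0 j], ?_⟩ (le_refl _)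
        rw [hβ t]
        have htD : 0 < t - D := by linarith [hm0 j]
        simp only [hG]
        rw [if_neg (show ¬ (t - D ≤ 0) by push_neg; linarith [hm0 j])]
        refine le_iInf fun i => ?_
        have h1 : α (t - (D + mf j)) ≤ α (t - D - mf i) := by
          rw [hα] at *
          exact alpha_mono hL hLb hr hR' (by linarith [hj i])
        exact le_trans h1 (hUB i (t - D))
    · -- lower bound
      have hwitD : ENNReal.ofReal D ≤ hdev α β := by
        refine hdev_ge α β D D hD fun d hd hle => ?_
        rw [hβ D, sub_self, hG0 0 (le_refl 0)] at hle
        have := alpha_eq_zero_iff hL hLb hr hR' (hα ▸ hle)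
        linarith
      rw [ENNReal.add_iSup]
      refine iSup_le fun i => ?_
      rw [← ENNReal.ofReal_add hD (hm0 i), hmf i]
      -- T1 bound (valid for both top and finite rho)
      have hwit1 : ENNReal.ofReal (D + (tau i *
          (if ss * r + b ≤ sig i then 1 else 0)
          - max (sig i - b) 0 / r)) ≤ hdev α β := by
        set T1 := tau i * (if ss * r + b ≤ sig i then 1 else 0)
          - max (sig i - b) 0 / r with hT1
        rcases le_or_gt T1 0 with hT | hT
        · exact le_trans (ENNReal.ofReal_le_ofReal (by linarith)) hwitD
        · have hind : ss * r + b ≤ sig i := by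
            by_contra hcon
            rw [hT1, if_neg hcon, mul_zero, zero_sub] at hT
            have : 0 ≤ max (sig i - b) 0 / r := div_nonneg (le_max_right _ _) hr.le
            linarith
          have hsb : 0 ≤ sig i - b := by linarith
          have hT1eq : T1 = tau i - (sig i - b) / r := by
            rw [hT1, if_pos hind, mul_one, max_eq_left hsb]
          refine hdev_ge α β (D + tau i) (D + T1) (by linarith [htau i]) fun d hd hle => ?_
          have htaupos : 0 < tau i := by
            have : 0 ≤ (sig i - b) / r := div_nonneg hsb hr.le
            rw [hT1eq] at hT; linarith
          rw [hβ, show D + tau i - D = tau i by ring] at hle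
          have hle2 : α (D + tau i - d) ≤ ENNReal.ofReal (sig i) := by
            refine le_trans hle (le_trans (hGle (tau i) htaupos i) ?_)
            rw [sub_self, ENNReal.ofReal_zero, mul_zero, add_zero]
          have hx := alpha_inv hL hLb hr hR' (hsig i) (hα ▸ hle2)
          have hcross : (sig i - L) / R' ≤ (sig i - b) / r := by
            rw [div_le_div_iff₀ hR' hr]
            have hprod : 0 ≤ (sig i - (ss * r + b)) * (R' - r) :=
              mul_nonneg (by linarith) (by linarith)
            have hsm2 : (R' - r) * ss * r = (b - L) * r := by rw [hsm]
            nlinarith [hprod, hsm2]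
          have hmaxeq : max 0 (max ((sig i - b)/r) ((sig i - L)/R')) = (sig i - b)/r := by
            rw [max_eq_left hcross, max_eq_right (div_nonneg hsb hr.le)]
          rw [hmaxeq] at hx
          rw [hT1eq]; linarith
      by_cases htop : rho i = ⊤
      · rw [if_pos htop]
        refine ofReal_D_max hwitD hwit1 ?_
        -- T2, top case
        set T2 := tau i * (if sig i ≤ ss * r + b then 1 else 0)
          - max (sig i - L) 0 / R' with hT2
        rcases le_or_gt T2 0 with hT | hT
        · exact le_trans (ENNReal.ofReal_le_ofReal (by linarith)) hwitD
        · have hind : sig i ≤ ss * r + b := by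
            by_contra hcon
            rw [hT2, if_neg hcon, mul_zero, zero_sub] at hT
            have : 0 ≤ max (sig i - L) 0 / R' := div_nonneg (le_max_right _ _) hR'.le
            linarith
          have hT2eq : T2 = tau i - max (sig i - L) 0 / R' := by
            rw [hT2, if_pos hind, mul_one]
          refine hdev_ge α β (D + tau i) (D + T2) (by linarith [htau i]) fun d hd hle => ?_
          have htaupos : 0 < tau i := by
            have : 0 ≤ max (sig i - L) 0 / R' := div_nonneg (le_max_right _ _) hR'.le
            rw [hT2eq] at hT; linarith
          rw [hβ, show D + tau i - D = tau i by ring] at hle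
          have hle2 : α (D + tau i - d) ≤ ENNReal.ofReal (sig i) := by
            refine le_trans hle (le_trans (hGle (tau i) htaupos i) ?_)
            rw [sub_self, ENNReal.ofReal_zero, mul_zero, add_zero]
          have hx := alpha_inv hL hLb hr hR' (hsig i) (hα ▸ hle2)
          have hcross : (sig i - b) / r ≤ (sig i - L) / R' := by
            rw [div_le_div_iff₀ hr hR']
            have hprod : 0 ≤ ((ss * r + b) - sig i) * (R' - r) :=
              mul_nonneg (by linarith) (by linarith)
            have hsm2 : (R' - r) * ss * r = (b - L) * r := by rw [hsm]
            nlinarith [hprod, hsm2]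
          have hmaxeq : max 0 (max ((sig i - b)/r) ((sig i - L)/R'))
              = max (sig i - L) 0 / R' := by
            rw [max_eq_right hcross]
            rcases le_total (sig i - L) 0 with h | h
            · rw [max_eq_right h, max_eq_left (div_nonpos_of_nonpos_of_nonneg h hR'.le),
                zero_div]
            · rw [max_eq_left h, max_eq_right (div_nonneg h hR'.le)]
          rw [hmaxeq] at hx
          rw [hT2eq]; linarith
      · rw [if_neg htop]
        refine ofReal_D_max hwitD hwit1 ?_
        -- T2, finite case
        set ρr := (rho i).toReal with hρr
        have hρpos : 0 < ρr := lt_of_lt_of_le hr (hrρ i htop)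
        set T2 := tau i * (if sig i ≤ ss * r + b then 1 else 0)
          + max (ss * r + b - sig i) 0 / ρr - ss with hT2
        rcases le_or_gt T2 0 with hT | hT
        · exact le_trans (ENNReal.ofReal_le_ofReal (by linarith)) hwitD
        · have hind : sig i ≤ ss * r + b := by
            by_contra hcon
            push_neg at hcon
            rw [hT2, if_neg (not_le.2 hcon), mul_zero,
              max_eq_right (by linarith), zero_div] at hT
            linarith
          have hmx : max (ss * r + b - sig i) 0 = ss * r + b - sig i :=
            max_eq_left (by linarith)
          have hT2eq : T2 = tau i + (ss * r + b - sig i) / ρr - ss := by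
            rw [hT2, if_pos hind, mul_one, hmx]
          set q := (ss * r + b - sig i) / ρr with hq
          have hq0 : 0 ≤ q := div_nonneg (by linarith) hρpos.le
          have hqc : ρr * q = ss * r + b - sig i := mul_div_cancel₀ _ hρpos.ne'
          have hsY : 0 < tau i + q := by rw [hT2eq] at hT; linarith
          refine hdev_ge α β (D + (tau i + q)) (D + T2)
            (by linarith [htau i]) fun d hd hle => ?_
          rw [hβ, show D + (tau i + q) - D = tau i + q by ring] at hle
          have hle2 : α (D + (tau i + q) - d) ≤ ENNReal.ofReal (ss * r + b) := by
            refine le_trans hle (le_trans (hGle (tau i + q) hsY i) ?_)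
            rw [show tau i + q - tau i = q by ring, ← ENNReal.ofReal_toReal htop, ← hρr,
              ← ENNReal.ofReal_mul hρpos.le, hqc,
              ← ENNReal.ofReal_add (hsig i) (by linarith)]
            apply ENNReal.ofReal_le_ofReal; linarith
          have hx := alpha_inv hL hLb hr hR' hY0 (hα ▸ hle2)
          have he1 : (ss * r + b - b) / r = ss := by
            rw [show ss * r + b - b = ss * r by ring]
            exact mul_div_cancel_right₀ _ hr.ne'
          have he2 : (ss * r + b - L) / R' = ss := by
            rw [show ss * r + b - L = R' * ss by linarith, mul_comm]
            exact mul_div_cancel_right₀ _ hR'.ne'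
          rw [he1, he2, max_self, max_eq_right hss0] at hx
          rw [hT2eq]; linarith
  exact main _ (fun i => rfl)
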